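/- Let G be a group, n ≥ 1, and suppose H_η (η ∈ d^n) is a family of subgroups of G indexed by n-tuples from {0,…,d-1} such that for every ν ∈ d^n there exists c_ν ∈ (⋂_{η ≠ ν} H_η) \ H_ν. Then for every subset J ⊆ d^n, the product c_J := Π_{η ∈ J} c_η (in some fixed order) satisfies: c_J ∈ H_ν if and only if ν ∉ J, provided G is abelian. -/
import Mathlib


/-- Baldwin–Saxl combinatorial core: let `G` be an abelian group and `(H_η)_{η ∈ d^n}` a
family of subgroups such that for every `ν` there is `c_ν` lying in all `H_η` with
`η ≠ ν` but not in `H_ν`. Then for every subset `J ⊆ d^n` the product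
`c_J = Π_{η ∈ J} c_η` lies in `H_ν` if and only if `ν ∉ J`. -/
theorem baldwin_saxl_core
    {G : Type*} [CommGroup G] (n d : ℕ)
    (H : (Fin n → Fin d) → Subgroup G) (c : (Fin n → Fin d) → G)
    (hc : ∀ ν, (∀ η, η ≠ ν → c ν ∈ H η) ∧ c ν ∉ H ν) :
    ∀ (J : Finset (Fin n → Fin d)) (ν : Fin n → Fin d),
      (∏ η ∈ J, c η) ∈ H ν ↔ ν ∉ J := by
  intro J ν
  have hrest : ∀ (S : Finset (Fin n → Fin d)), ν ∉ S → (∏ η ∈ S, c η) ∈ H ν := by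
    intro S hS
    exact Subgroup.prod_mem _ fun η hη => (hc η).1 ν (fun h => hS (h ▸ hη))
  constructor
  · intro hmem hν
    have := Finset.mul_prod_erase J c hν
    have herase : (∏ η ∈ J.erase ν, c η) ∈ H ν := hrest _ (Finset.notMem_erase _ _)
    have : c ν ∈ H ν := by
      have : c ν = (∏ η ∈ J, c η) * (∏ η ∈ J.erase ν, c η)⁻¹ := by
        rw [← Finset.mul_prod_erase J c hν]; group
      rw [this]
      exact mul_mem hmem (inv_mem herase)
    exact (hc ν).2 this
  · exact hrest J
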